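/- For the semicircle density on [−2,2], one has ∫_{−2}^{2} (2 + x)^n · √(4 − x²)/(2π) dx = C_{n+1}, the (n+1)-st Catalan number C_{n+1} = (1/(n+2))·binom(2n+2, n+1), for every integer n ≥ 0. -/

import Mathlib

open Real Finset intervalIntegral

lemma prod_ratio (m : ℕ) :
    ∏ i ∈ Finset.range m, ((2 * (i:ℝ) + 1) / (2 * i + 2)) = (Nat.centralBinom m : ℝ) / 4 ^ m := by
  induction m with
  | zero => simp [Nat.centralBinom]
  | succ k ih =>
    rw [prod_range_succ, ih]
    have h := Nat.succ_mul_centralBinom_succ k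
    have h' : ((k:ℝ) + 1) * (Nat.centralBinom (k+1) : ℝ) = 2 * (2 * k + 1) * Nat.centralBinom k := by
      exact_mod_cast congrArg (Nat.cast : ℕ → ℝ) h
    have hk : ((k:ℝ) + 1) ≠ 0 := by positivity
    field_simp
    linear_combination (-2 * (4:ℝ)^k) * h'

lemma cos_pow_even (m : ℕ) :
    (∫ x in (0:ℝ)..π, Real.cos x ^ (2 * m)) = π * ∏ i ∈ range m, (2 * (i : ℝ) + 1) / (2 * i + 2) := by
  induction m with
  | zero => simp
  | succ k ih =>
    rw [prod_range_succ_comm, mul_left_comm, ← ih, Nat.mul_succ, integral_cos_pow]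
    norm_cast
    simp [-Nat.cast_add]

lemma moment (m : ℕ) :
    ∫ x in (-2:ℝ)..2, x ^ (2*m) * Real.sqrt (4 - x ^ 2) = 2 * π * (catalan m : ℝ) := by
  have hg : Continuous fun x : ℝ => x ^ (2*m) * Real.sqrt (4 - x ^ 2) := by
    exact (continuous_pow _).mul ((continuous_const.sub (continuous_pow 2)).sqrt)
  have hderiv : ∀ θ ∈ Set.uIcc (0:ℝ) π, HasDerivAt (fun t => 2 * Real.cos t) (-2 * Real.sin θ) θ := by
    intro θ _
    simpa [mul_comm, mul_neg, neg_mul] using (Real.hasDerivAt_cos θ).const_mul 2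
  have hcv := integral_comp_mul_deriv (a := 0) (b := π) hderiv (by fun_prop) hg
  rw [show (2:ℝ) * Real.cos 0 = 2 by simp, show (2:ℝ) * Real.cos π = -2 by simp] at hcv
  have hL : (∫ θ in (0:ℝ)..π,
        ((fun x : ℝ => x ^ (2*m) * Real.sqrt (4 - x ^ 2)) ∘ fun t => 2 * Real.cos t) θ *
          (-2 * Real.sin θ))
      = ∫ θ in (0:ℝ)..π, -(4 * 4 ^ m) *
          (Real.cos θ ^ (2*m) - Real.cos θ ^ (2*(m+1))) := by
    apply integral_congr
    intro θ hθ
    rw [Set.uIcc_of_le Real.pi_pos.le] at hθ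
    have hs : 0 ≤ Real.sin θ := Real.sin_nonneg_of_nonneg_of_le_pi hθ.1 hθ.2
    have h4 : Real.sqrt (4 - (2 * Real.cos θ) ^ 2) = 2 * Real.sin θ := by
      rw [show (4:ℝ) - (2 * Real.cos θ) ^ 2 = (2 * Real.sin θ) ^ 2 by
        nlinarith [Real.sin_sq_add_cos_sq θ]]
      exact Real.sqrt_sq (by positivity)
    have hsq : Real.sin θ ^ 2 = 1 - Real.cos θ ^ 2 := Real.sin_sq θ
    simp only [Function.comp]
    rw [h4, mul_pow, pow_mul]
    linear_combination (-4 * (4:ℝ) ^ m * (Real.cos θ ^ 2) ^ m) * hsq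
  rw [hL] at hcv
  have hi : ∀ k : ℕ, IntervalIntegrable (fun θ => Real.cos θ ^ k) MeasureTheory.volume 0 π :=
    fun k => (Real.continuous_cos.pow k).intervalIntegrable 0 π
  rw [integral_const_mul, integral_sub (hi (2*m)) (hi (2*(m+1))), cos_pow_even m,
    cos_pow_even (m+1), prod_range_succ] at hcv
  rw [intervalIntegral.integral_symm 2 (-2), ← hcv, prod_ratio]
  have hc : ((m:ℝ) + 1) * (catalan m : ℝ) = (Nat.centralBinom m : ℝ) := by
    exact_mod_cast congrArg (Nat.cast : ℕ → ℝ) (succ_mul_catalan_eq_centralBinom m)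
  have h4 : (4:ℝ) ^ m ≠ 0 := by positivity
  have hm : ((m:ℝ) + 1) ≠ 0 := by positivity
  have hm2 : (2*(m:ℝ) + 2) ≠ 0 := by positivity
  field_simp
  linear_combination (-4) * hc

/-- For the semicircle density on `[−2,2]`,
`∫_{−2}^{2} (2 + x)^n √(4 − x²)/(2π) dx = C_{n+1}`, the `(n+1)`-st Catalan number. -/
theorem stmt_10 (n : ℕ) :
    ∫ x in (-2 : ℝ)..2, (2 + x) ^ n * Real.sqrt (4 - x ^ 2) / (2 * π)
      = (catalan (n + 1) : ℝ) := by
  have hg : Continuous fun x : ℝ => (2 + x) ^ n * Real.sqrt (4 - x ^ 2) := by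
    exact ((continuous_const.add continuous_id).pow n).mul
      ((continuous_const.sub (continuous_pow 2)).sqrt)
  have hderiv : ∀ y ∈ Set.uIcc (0:ℝ) 2, HasDerivAt (fun t : ℝ => t ^ 2 - 2) (2 * y) y := by
    intro y _
    simpa using ((hasDerivAt_pow 2 y).sub_const 2)
  have hcv := integral_comp_mul_deriv (a := 0) (b := 2) hderiv (by fun_prop) hg
  rw [show ((0:ℝ) ^ 2 - 2) = -2 by norm_num, show ((2:ℝ) ^ 2 - 2) = 2 by norm_num] at hcv
  have hL : (∫ y in (0:ℝ)..2,
        ((fun x : ℝ => (2 + x) ^ n * Real.sqrt (4 - x ^ 2)) ∘ fun t => t ^ 2 - 2) y * (2 * y))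
      = ∫ y in (0:ℝ)..2, 2 * (y ^ (2 * (n + 1)) * Real.sqrt (4 - y ^ 2)) := by
    apply integral_congr
    intro y hy
    rw [Set.uIcc_of_le (by norm_num : (0:ℝ) ≤ 2)] at hy
    have hy0 : (0:ℝ) ≤ y := hy.1
    have h1 : (4:ℝ) - (y ^ 2 - 2) ^ 2 = y ^ 2 * (4 - y ^ 2) := by ring
    have h2 : Real.sqrt ((4:ℝ) - (y ^ 2 - 2) ^ 2) = y * Real.sqrt (4 - y ^ 2) := by
      rw [h1, Real.sqrt_mul (sq_nonneg y), Real.sqrt_sq hy0]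
    simp only [Function.comp]
    rw [show (2:ℝ) + (y ^ 2 - 2) = y ^ 2 by ring, h2, ← pow_mul]
    ring
  rw [hL, integral_const_mul] at hcv
  have heven : (∫ x in (-2:ℝ)..0, x ^ (2 * (n + 1)) * Real.sqrt (4 - x ^ 2))
      = ∫ x in (0:ℝ)..2, x ^ (2 * (n + 1)) * Real.sqrt (4 - x ^ 2) := by
    have hcn := integral_comp_neg (a := (0:ℝ)) (b := 2)
      (fun x => x ^ (2 * (n + 1)) * Real.sqrt (4 - x ^ 2))
    rw [neg_zero] at hcn
    rw [← hcn]
    apply integral_congr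
    intro x _
    simp [pow_mul, neg_sq]
  have hint : ∀ a b : ℝ, IntervalIntegrable
      (fun x => x ^ (2 * (n + 1)) * Real.sqrt (4 - x ^ 2)) MeasureTheory.volume a b :=
    fun a b => ((continuous_pow _).mul
      ((continuous_const.sub (continuous_pow 2)).sqrt)).intervalIntegrable a b
  have hsplit := integral_add_adjacent_intervals (a := (-2:ℝ)) (b := 0) (c := 2)
    (hint _ _) (hint _ _)
  have hmom := moment (n + 1)
  have key : (∫ x in (-2:ℝ)..2, (2 + x) ^ n * Real.sqrt (4 - x ^ 2))
      = 2 * π * (catalan (n + 1) : ℝ) := by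
    rw [← hcv, ← hmom, ← hsplit, heven]
    ring
  calc ∫ x in (-2:ℝ)..2, (2 + x) ^ n * Real.sqrt (4 - x ^ 2) / (2 * π)
      = (∫ x in (-2:ℝ)..2, (2 + x) ^ n * Real.sqrt (4 - x ^ 2)) / (2 * π) := integral_div _ _
    _ = (catalan (n + 1) : ℝ) := by
        rw [key]; field_simp
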